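/- Suppose Δ ∈ ℝ^{d×T} satisfies ‖Δ‖_* ≤ 4√(2r) ‖Δ‖_F (the cone condition implied by 3‖Δ₁‖_* ≥ ‖Δ₂‖_* with ‖Δ₁‖_* ≤ √(2r)‖Δ‖_F). Then for any r' ≥ 1, writing Δ_{r'} for the best rank-r' approximation of Δ, one has ‖Δ − Δ_{r'}‖_F ≤ √(32 r / r') · ‖Δ‖_F. -/

import Mathlib

open Matrix MeasureTheory

noncomputable def nuclearNorm {d T : ℕ} (A : Matrix (Fin d) (Fin T) ℝ) : ℝ :=
  ∑ i, Real.sqrt ((show (Aᵀ * A).IsHermitian by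
    simpa [Matrix.conjTranspose_eq_transpose_of_trivial] using
      Matrix.isHermitian_conjTranspose_mul_self A).eigenvalues i)

noncomputable def frobNorm {d T : ℕ} (A : Matrix (Fin d) (Fin T) ℝ) : ℝ :=
  Real.sqrt (∑ i, ∑ j, (A i j) ^ 2)

noncomputable def opNorm {m n : ℕ} (A : Matrix (Fin m) (Fin n) ℝ) : ℝ :=
  ‖LinearMap.toContinuousLinearMap (Matrix.toEuclideanLin A)‖

noncomputable def minEig {n : ℕ} (A : Matrix (Fin n) (Fin n) ℝ) (hA : A.IsHermitian) : ℝ :=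
  ⨅ i, hA.eigenvalues i

noncomputable def colNorm {d T : ℕ} (A : Matrix (Fin d) (Fin T) ℝ) (t : Fin T) : ℝ :=
  Real.sqrt (∑ i, (A i t) ^ 2)

/-- `sin θ(B, B̃)`: sine of the largest principal angle between column spaces,
equal to the operator norm of `(I - B̃ B̃ᵀ) B`. -/
noncomputable def sinTheta {d r : ℕ} (B Bt : Matrix (Fin d) (Fin r) ℝ) : ℝ :=
  opNorm ((1 - Bt * Btᵀ) * B)

lemma frob_sq {d T : ℕ} (A : Matrix (Fin d) (Fin T) ℝ) :
    frobNorm A ^ 2 = Matrix.trace (Aᴴ * A) := by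
  rw [frobNorm, Real.sq_sqrt]
  · rw [Matrix.trace]
    simp only [Matrix.diag_apply, Matrix.mul_apply, Matrix.conjTranspose_apply, star_trivial]
    rw [Finset.sum_comm]
    congr 1; ext i; congr 1; ext j; ring
  · positivity

lemma frob_nonneg {d T : ℕ} (A : Matrix (Fin d) (Fin T) ℝ) : 0 ≤ frobNorm A :=
  Real.sqrt_nonneg _

lemma exists_truncation {d T : ℕ} (Δ : Matrix (Fin d) (Fin T) ℝ) :
    ∃ lam : Fin T → ℝ, (∀ k, 0 ≤ lam k) ∧
      nuclearNorm Δ = ∑ k, Real.sqrt (lam k) ∧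
      ∀ K : Finset (Fin T), ∃ L : Matrix (Fin d) (Fin T) ℝ, L.rank ≤ K.card ∧
        frobNorm (Δ - L) ^ 2 = ∑ k ∈ Finset.univ.filter (· ∉ K), lam k := by
  classical
  have hM : (Δᴴ * Δ).IsHermitian := Matrix.isHermitian_conjTranspose_mul_self Δ
  refine ⟨hM.eigenvalues, fun k => Matrix.eigenvalues_conjTranspose_mul_self_nonneg Δ k,
    rfl, fun K => ?_⟩
  obtain ⟨U, hUU, hUU', hdiag⟩ : ∃ U : Matrix (Fin T) (Fin T) ℝ,
      U * Uᴴ = 1 ∧ Uᴴ * U = 1 ∧ Uᴴ * (Δᴴ * Δ) * U = Matrix.diagonal hM.eigenvalues := by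
    refine ⟨(hM.eigenvectorUnitary : Matrix (Fin T) (Fin T) ℝ), ?_, ?_, ?_⟩
    · exact (Matrix.mem_unitaryGroup_iff).mp hM.eigenvectorUnitary.2
    · exact (Matrix.mem_unitaryGroup_iff').mp hM.eigenvectorUnitary.2
    · simpa [Unitary.conjStarAlgAut_star_apply, Matrix.star_eq_conjTranspose] using
        hM.conjStarAlgAut_star_eigenvectorUnitary
  set lam := hM.eigenvalues with hlam
  clear_value lam  -- make eigenvalues opaque
  set p : Fin T → ℝ := fun k => if k ∈ K then 1 else 0 with hp
  set q : Fin T → ℝ := fun k => if k ∈ K then 0 else 1 with hq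
  refine ⟨Δ * (U * Matrix.diagonal p * Uᴴ), ?_, ?_⟩
  · refine le_trans (Matrix.rank_mul_le_right _ _) ?_
    refine le_trans (Matrix.rank_mul_le_left _ _) ?_
    refine le_trans (Matrix.rank_mul_le_right _ _) ?_
    rw [Matrix.rank_diagonal, Fintype.card_subtype]
    apply le_of_eq
    congr 1
    ext k
    by_cases h : k ∈ K <;> simp [hp, h]
  · have hres : Δ - Δ * (U * Matrix.diagonal p * Uᴴ) = Δ * (U * Matrix.diagonal q * Uᴴ) := by
      have h1 : Matrix.diagonal q = 1 - Matrix.diagonal p := by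
        ext i j
        by_cases hij : i = j
        · subst hij
          by_cases h : i ∈ K <;>
            simp [hq, hp, h, Matrix.sub_apply, Matrix.one_apply, Matrix.diagonal_apply_eq]
        · simp [hq, hp, Matrix.sub_apply, Matrix.diagonal_apply_ne _ hij,
            Matrix.one_apply_ne hij]
      rw [h1, Matrix.mul_sub, Matrix.sub_mul, Matrix.mul_one, hUU, Matrix.mul_sub,
        Matrix.mul_one]
    rw [hres, frob_sq]
    have hqh : (Matrix.diagonal q)ᴴ = Matrix.diagonal q := by
      simp [Matrix.diagonal_conjTranspose]
    have key : (Δ * (U * Matrix.diagonal q * Uᴴ))ᴴ * (Δ * (U * Matrix.diagonal q * Uᴴ)) =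
        U * (Matrix.diagonal q * (Uᴴ * (Δᴴ * Δ) * U) * Matrix.diagonal q) * Uᴴ := by
      rw [Matrix.conjTranspose_mul, Matrix.conjTranspose_mul, Matrix.conjTranspose_mul, hqh,
        Matrix.conjTranspose_conjTranspose]
      simp only [Matrix.mul_assoc]
    rw [key, Matrix.trace_mul_comm, ← Matrix.mul_assoc, hUU', Matrix.one_mul, hdiag,
      Matrix.diagonal_mul_diagonal, Matrix.diagonal_mul_diagonal, Matrix.trace_diagonal,
      Finset.sum_filter]
    congr 1; ext k; by_cases h : k ∈ K <;> simp [hq, h]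

theorem cone_truncation_bound {d T : ℕ} (r r' : ℕ) (hr' : 1 ≤ r')
    (Δ Δr : Matrix (Fin d) (Fin T) ℝ)
    (hcone : nuclearNorm Δ ≤ 4 * Real.sqrt (2 * r) * frobNorm Δ)
    (hrank : Δr.rank ≤ r')
    (hbest : ∀ L : Matrix (Fin d) (Fin T) ℝ, L.rank ≤ r' →
      frobNorm (Δ - Δr) ≤ frobNorm (Δ - L)) :
    frobNorm (Δ - Δr) ≤ Real.sqrt (32 * r / r') * frobNorm Δ := by
  classical
  obtain ⟨lam, hlam_nonneg, hnuc, htrunc⟩ := exists_truncation Δ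
  have hσ_nonneg : ∀ k, 0 ≤ Real.sqrt (lam k) := fun k => Real.sqrt_nonneg _
  set σ : Fin T → ℝ := fun k => Real.sqrt (lam k) with hσ
  have hsig_sq : ∀ k, lam k = σ k ^ 2 := fun k => (Real.sq_sqrt (hlam_nonneg k)).symm
  obtain ⟨S, hS⟩ : ∃ S : ℝ, S = ∑ k, σ k := ⟨_, rfl⟩
  have hS_nonneg : 0 ≤ S := hS ▸ Finset.sum_nonneg fun k _ => hσ_nonneg k
  have hF_nonneg : 0 ≤ frobNorm Δ := frob_nonneg Δ
  have hr'pos : (0:ℝ) < r' := by exact_mod_cast hr'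
  obtain ⟨c, hc⟩ : ∃ c : ℝ, c = S / r' := ⟨_, rfl⟩
  have hc_nonneg : 0 ≤ c := hc ▸ div_nonneg hS_nonneg hr'pos.le
  set K : Finset (Fin T) := Finset.univ.filter (fun k => c < σ k) with hK
  -- card bound
  have hsumK : (K.card : ℝ) * c ≤ S := by
    have h1 : (K.card : ℝ) * c ≤ ∑ k ∈ K, σ k := by
      rw [← nsmul_eq_mul]
      refine Finset.card_nsmul_le_sum K σ c fun k hk => ?_
      exact le_of_lt (by simpa [hK] using hk)
    refine le_trans h1 ?_
    rw [hS]
    exact Finset.sum_le_sum_of_subset_of_nonneg (Finset.subset_univ K)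
      (fun k _ _ => hσ_nonneg k)
  have hcard : K.card ≤ r' := by
    by_cases hS0 : S = 0
    · have : K = ∅ := by
        rw [hK, Finset.filter_eq_empty_iff]
        intro k _
        have : σ k = 0 := le_antisymm (by
          have := Finset.single_le_sum (f := σ) (fun k _ => hσ_nonneg k) (Finset.mem_univ k)
          rw [← hS, hS0] at this; linarith) (hσ_nonneg k)
        simp [this, hc, hS0]
      simp [this]
    · have hSpos : 0 < S := lt_of_le_of_ne hS_nonneg (Ne.symm hS0)
      have hcpos : 0 < c := by rw [hc]; exact div_pos hSpos hr'pos
      have : (K.card : ℝ) ≤ r' := by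
        rw [hc] at hsumK
        rw [← mul_le_mul_iff_of_pos_right (div_pos hSpos hr'pos)]
        calc (K.card : ℝ) * (S / r') ≤ S := hsumK
          _ = ↑r' * (S / ↑r') := by field_simp
      exact_mod_cast this
  -- the truncation
  obtain ⟨L, hrankL, hfrobL⟩ := htrunc K
  have hrankL' : L.rank ≤ r' := le_trans hrankL hcard
  -- tail bound
  have htail : ∑ k ∈ Finset.univ.filter (· ∉ K), lam k ≤ c * S := by
    calc ∑ k ∈ Finset.univ.filter (· ∉ K), lam k
        ≤ ∑ k ∈ Finset.univ.filter (· ∉ K), c * σ k := by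
          refine Finset.sum_le_sum fun k hk => ?_
          have hkK : ¬ c < σ k := by
            simp only [hK, Finset.mem_filter, Finset.mem_univ, true_and] at hk
            simpa [hK] using hk
          have hσc : σ k ≤ c := not_lt.mp hkK
          rw [hsig_sq k, sq]
          exact mul_le_mul_of_nonneg_right hσc (hσ_nonneg k)
      _ ≤ ∑ k, c * σ k := Finset.sum_le_sum_of_subset_of_nonneg
          (Finset.filter_subset _ _) (fun k _ _ => mul_nonneg hc_nonneg (hσ_nonneg k))
      _ = c * S := by rw [hS, Finset.mul_sum]
  -- nuclear norm bound
  have hS_le : S ≤ 4 * Real.sqrt (2 * r) * frobNorm Δ := by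
    rw [hS, ← hnuc]; exact hcone
  have hS_sq : S ^ 2 ≤ 32 * r * frobNorm Δ ^ 2 := by
    have hsq : Real.sqrt (2 * r) ^ 2 = 2 * r := Real.sq_sqrt (by positivity)
    nlinarith [Real.sqrt_nonneg (2 * (r:ℝ)), mul_self_le_mul_self hS_nonneg hS_le]
  -- combine
  have h1 : frobNorm (Δ - L) ^ 2 ≤ 32 * r / r' * frobNorm Δ ^ 2 := by
    rw [hfrobL]
    refine le_trans htail ?_
    rw [hc]
    rw [div_mul_eq_mul_div, div_mul_eq_mul_div, div_le_div_iff₀ hr'pos hr'pos]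
    nlinarith [hS_sq, hr'pos]
  have h2 : frobNorm (Δ - L) ≤ Real.sqrt (32 * r / r') * frobNorm Δ := by
    have h3 : (0:ℝ) ≤ 32 * r / r' := by positivity
    nlinarith [frob_nonneg (Δ - L), Real.sq_sqrt h3, Real.sqrt_nonneg (32 * (r:ℝ) / r'),
      mul_nonneg (Real.sqrt_nonneg (32 * (r:ℝ) / r')) hF_nonneg]
  exact le_trans (hbest L hrankL') h2
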